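/- Let ν > 0, α > 0 and δ ∈ (0, π/6). There exists a constant C > 0, depending only on ν, α and δ, such that for every integer n with n ≠ 0 and every λ ∈ ℂ with λ + να² ≠ 0 and |arg(λ + να²)| ≤ 2π/3 − δ, the complex number s_n determined by Re s_n > 0 and s_n² = n²α² + λ/ν satisfies |s_n| ≥ Re s_n ≥ C ( α √(n² − 1) + |λ + να²|^{1/2} ). -/

import Mathlib

open Real


private lemma stmt6_aux (a b zr zi x y : ℝ) (ha : 0 ≤ a) (hb0 : 0 < b)
    (hb : zr^2 + zi^2 = b^2) (hcos : -(b/2) ≤ zr) (hx : 0 < x)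
    (hre : x^2 - y^2 = a + zr) (him : zi = 2*(x*y)) :
    Real.sqrt a + Real.sqrt b ≤ 4*x := by
  have him2 : zi^2 = 4*(x^2*y^2) := by rw [him]; ring
  have K1 : y^2 ≤ 3*x^2 := by
    rcases le_or_gt 0 (a + zr) with h | h
    · nlinarith
    · have hzr : zr < 0 := by nlinarith
      have h1 : zr^2 ≤ b^2/4 := by nlinarith
      have h2 : 3*zr^2 ≤ zi^2 := by nlinarith
      have h3 : (a+zr)^2 ≤ zr^2 := by nlinarith [mul_nonneg ha (by linarith : (0:ℝ) ≤ -a - 2*zr)]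
      have h4 : 3*(a+zr)^2 ≤ zi^2 := by linarith
      have hv : x^2 < y^2 := by nlinarith
      nlinarith [h4, him2, hv]
  have hA2 : ((a+b)/2)^2 ≤ (x^2+y^2)^2 := by
    have hsq : (a + zr)^2 + zi^2 = (x^2+y^2)^2 := by nlinarith [hre, him2]
    nlinarith [sq_nonneg (a - b), hsq]
  have hT : (a+b)/2 ≤ x^2+y^2 := by
    have := Real.sqrt_le_sqrt hA2
    rwa [Real.sqrt_sq (by positivity), Real.sqrt_sq (by positivity)] at this
  have K2 : a + b ≤ 8*x^2 := by nlinarith [hT, K1]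
  nlinarith [Real.sq_sqrt ha, Real.sq_sqrt hb0.le, Real.sqrt_nonneg a,
    Real.sqrt_nonneg b, sq_nonneg (Real.sqrt a - Real.sqrt b), hx, K2]

set_option maxHeartbeats 1000000 in
/-- Lower bound for the square root `s_n` of the Stokes symbol `n²α² + λ/ν` in the
sector `|arg(λ + να²)| ≤ 2π/3 - δ`: there is `C > 0` depending only on `ν, α, δ`
with `|s_n| ≥ Re s_n ≥ C(α√(n²-1) + |λ + να²|^{1/2})`. -/
theorem stmt_6 (ν α δ : ℝ) (hν : 0 < ν) (hα : 0 < α) (hδ : 0 < δ)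
    (hδ' : δ < π / 6) :
    ∃ C : ℝ, 0 < C ∧
      ∀ n : ℤ, n ≠ 0 →
        ∀ lam : ℂ, lam + (ν : ℂ) * (α : ℂ) ^ 2 ≠ 0 →
          |(lam + (ν : ℂ) * (α : ℂ) ^ 2).arg| ≤ 2 * π / 3 - δ →
          ∀ s : ℂ, 0 < s.re →
            s ^ 2 = (n : ℂ) ^ 2 * (α : ℂ) ^ 2 + lam / (ν : ℂ) →
            ‖s‖ ≥ s.re ∧
            s.re ≥ C * (α * Real.sqrt ((n : ℝ) ^ 2 - 1) +
              Real.sqrt ‖lam + (ν : ℂ) * (α : ℂ) ^ 2‖) := by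
  have hπ := Real.pi_gt_three
  have hsν : 0 < Real.sqrt ν := Real.sqrt_pos.mpr hν
  refine ⟨min (1/4) (1/(4*Real.sqrt ν)), lt_min (by norm_num) (by positivity), ?_⟩
  intro n hn lam hμ0 harg s hs hs2
  set μ := lam + (ν : ℂ) * (α : ℂ) ^ 2 with hμdef
  have hν0 : (ν : ℂ) ≠ 0 := by exact_mod_cast hν.ne'
  set a : ℝ := α^2 * ((n : ℝ)^2 - 1) with ha_def
  have hn1 : (1:ℝ) ≤ (n:ℝ)^2 := by
    have : (1:ℤ) ≤ n^2 := by rcases lt_or_gt_of_ne hn with h|h <;> nlinarith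
    exact_mod_cast this
  have ha : 0 ≤ a := by nlinarith
  set z : ℂ := μ / (ν : ℂ) with hz_def
  have hz : s^2 = (a : ℂ) + z := by
    rw [hs2, hz_def, hμdef, ha_def]
    push_cast
    field_simp
    ring
  have hz0 : z ≠ 0 := div_ne_zero hμ0 hν0
  have hb0 : 0 < ‖z‖ := norm_pos_iff.mpr hz0
  set b : ℝ := ‖z‖ with hb_def
  have hb : z.re^2 + z.im^2 = b^2 := by
    rw [hb_def, Complex.sq_norm, Complex.normSq_apply]; ring
  -- arg z = arg μ
  have hargz : z.arg = μ.arg := by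
    have : z = ((ν⁻¹ : ℝ) : ℂ) * μ := by
      rw [hz_def]; push_cast; field_simp
    rw [this]
    exact Complex.arg_real_mul μ (inv_pos.mpr hν)
  -- cos bound: z.re ≥ -b/2
  have hcos : -(b/2) ≤ z.re := by
    have hle : |z.arg| ≤ 2*π/3 - δ := by rw [hargz]; exact harg
    have h1 : Real.cos (2*π/3 - δ) ≤ Real.cos |z.arg| :=
      Real.cos_le_cos_of_nonneg_of_le_pi (abs_nonneg _) (by linarith) hle
    have h2 : Real.cos (2*π/3) ≤ Real.cos (2*π/3 - δ) :=
      Real.cos_le_cos_of_nonneg_of_le_pi (by linarith) (by linarith) (by linarith)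
    have h3 : Real.cos (2*π/3) = -(1/2) := by
      rw [show (2*π/3) = π - π/3 by ring, Real.cos_pi_sub, Real.cos_pi_div_three]
    have h4 : Real.cos z.arg = z.re / b := by
      rw [hb_def]; exact Complex.cos_arg hz0
    rw [Real.cos_abs, h4] at h1
    have h5 : -(1/2) ≤ z.re / b := by linarith
    have h6 := mul_le_mul_of_nonneg_right h5 hb0.le
    rw [div_mul_cancel₀ _ hb0.ne'] at h6
    linarith [h6]
  -- real and imaginary parts of s²
  set x : ℝ := s.re with hx_def
  set y : ℝ := s.im with hy_def
  have hre : x^2 - y^2 = a + z.re := by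
    have := congrArg Complex.re hz
    simp only [pow_two, Complex.mul_re, Complex.add_re, Complex.ofReal_re] at this
    nlinarith [this]
  have him : z.im = 2*(x*y) := by
    have := congrArg Complex.im hz
    simp only [pow_two, Complex.mul_im, Complex.add_im, Complex.ofReal_im, zero_add] at this
    rw [hx_def, hy_def]; linarith [this]
  have him2 : z.im^2 = 4*(x^2*y^2) := by rw [him]; ring
  have K4 : Real.sqrt a + Real.sqrt b ≤ 4*x :=
    stmt6_aux a b z.re z.im x y ha hb0 hb hcos hs hre (by linarith [him])
  have hsa : Real.sqrt a = α * Real.sqrt ((n:ℝ)^2 - 1) := by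
    rw [ha_def, Real.sqrt_mul (sq_nonneg α), Real.sqrt_sq hα.le]
  have hb' : b = ‖μ‖ / ν := by
    rw [hb_def, hz_def, norm_div, Complex.norm_real, Real.norm_eq_abs, abs_of_pos hν]
  have hsb : Real.sqrt b = Real.sqrt ‖μ‖ / Real.sqrt ν := by
    rw [hb', Real.sqrt_div (by positivity)]
  refine ⟨Complex.re_le_norm s, ?_⟩
  set P := α * Real.sqrt ((n:ℝ)^2 - 1)
  set Q := Real.sqrt ‖μ‖
  have hP : 0 ≤ P := by positivity
  have hQ : 0 ≤ Q := Real.sqrt_nonneg _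
  have hmin1 := min_le_left (1/4 : ℝ) (1/(4*Real.sqrt ν))
  have hmin2 := min_le_right (1/4 : ℝ) (1/(4*Real.sqrt ν))
  have h1 : min (1/4 : ℝ) (1/(4*Real.sqrt ν)) * (P + Q) ≤ (1/4)*P + (1/(4*Real.sqrt ν))*Q := by
    have e := mul_add (min (1/4 : ℝ) (1/(4*Real.sqrt ν))) P Q
    linarith [mul_le_mul_of_nonneg_right hmin1 hP, mul_le_mul_of_nonneg_right hmin2 hQ, e]
  have h2 : (1/(4*Real.sqrt ν))*Q = (1/4) * Real.sqrt b := by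
    rw [hsb]; field_simp
  have h3 : (1/4 : ℝ)*P = (1/4) * Real.sqrt a := by rw [hsa]
  linarith [h1, h2.le, h3.le, K4]
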